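/- Let S = {x ∈ ℝⁿ : ‖x‖₀ ≤ s} with s < n and x* ∈ S. If |supp(x*)| = s, then the Fréchet normal cone to S at x* equals ℝ_{supp(x*)}^⊥ = {v ∈ ℝⁿ : vᵢ = 0 for all i ∈ supp(x*)}; if |supp(x*)| < s, then the Fréchet normal cone to S at x* equals {0}. -/

import Mathlib

open Filter Topology Metric Set
open scoped Classical

noncomputable section

abbrev E (n : ℕ) := EuclideanSpace ℝ (Fin n)

/-- Bouligand tangent cone. -/
def bouligand {n : ℕ} (S : Set (E n)) (x : E n) : Set (E n) :=
  {d | ∃ t : ℕ → ℝ, ∃ dk : ℕ → E n,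
    (∀ k, 0 < t k) ∧ Tendsto t atTop (𝓝 0) ∧ Tendsto dk atTop (𝓝 d) ∧
    ∀ k, x + t k • dk k ∈ S}

/-- Fréchet (regular) normal cone. -/
def frechetNormal {n : ℕ} (S : Set (E n)) (x : E n) : Set (E n) :=
  {v | ∀ ε > (0 : ℝ), ∃ δ > (0 : ℝ), ∀ y ∈ S, ‖y - x‖ < δ →
    (inner ℝ v (y - x) : ℝ) ≤ ε * ‖y - x‖}

/-- Mordukhovich (limiting) normal cone. -/
def limitingNormal {n : ℕ} (S : Set (E n)) (x : E n) : Set (E n) :=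
  {v | ∃ xk : ℕ → E n, ∃ vk : ℕ → E n,
    (∀ k, xk k ∈ S) ∧ Tendsto xk atTop (𝓝 x) ∧
    (∀ k, vk k ∈ frechetNormal S (xk k)) ∧ Tendsto vk atTop (𝓝 v)}

/-- Directional limiting normal cone. -/
def dirLimitingNormal {n : ℕ} (S : Set (E n)) (x d : E n) : Set (E n) :=
  {v | ∃ t : ℕ → ℝ, ∃ dk : ℕ → E n, ∃ vk : ℕ → E n,
    (∀ k, 0 < t k) ∧ Tendsto t atTop (𝓝 0) ∧ Tendsto dk atTop (𝓝 d) ∧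
    Tendsto vk atTop (𝓝 v) ∧ ∀ k, vk k ∈ frechetNormal S (x + t k • dk k)}

/-- Support of a vector. -/
def supp {n : ℕ} (x : E n) : Finset (Fin n) := Finset.univ.filter (fun i => x i ≠ 0)

/-- The ℓ₀ "norm": number of nonzero components. -/
def l0 {n : ℕ} (x : E n) : ℕ := (supp x).card

/-- The sparsity set {x : ‖x‖₀ ≤ s}. -/
def sparseSet (n s : ℕ) : Set (E n) := {x | l0 x ≤ s}

/-- Coordinate subspace ℝ_I of vectors supported on I. -/
def coordSub {n : ℕ} (I : Finset (Fin n)) : Set (E n) := {x | ∀ i ∉ I, x i = 0}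

lemma supp_add_single_subset {n : ℕ} (x : E n) (i : Fin n) (t : ℝ) :
    supp (x + EuclideanSpace.single i t) ⊆ insert i (supp x) := by
  intro j hj
  simp only [supp, Finset.mem_filter, Finset.mem_univ, true_and] at hj ⊢
  by_cases h : j = i
  · simp [h]
  · have : (x + EuclideanSpace.single i t) j = x j := by
      simp [EuclideanSpace.single_apply, h]
    rw [this] at hj
    exact Finset.mem_insert_of_mem (by simp [supp, hj])

lemma coord_zero_of_mem {n s : ℕ} (x v : E n) (i : Fin n)
    (hv : v ∈ frechetNormal (sparseSet n s) x)
    (hmem : ∀ t : ℝ, x + EuclideanSpace.single i t ∈ sparseSet n s) : v i = 0 := by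
  by_contra h
  have hε : (0:ℝ) < |v i| / 2 := by positivity
  obtain ⟨δ, hδ, H⟩ := hv (|v i| / 2) hε
  set t : ℝ := if 0 < v i then δ/2 else -(δ/2) with ht
  have hvt : v i * t = |v i| * (δ/2) := by
    rcases lt_trichotomy 0 (v i) with h1 | h1 | h1
    · simp [ht, h1, abs_of_pos h1]
    · exact absurd h1.symm h
    · simp only [ht, if_neg (not_lt.mpr h1.le), abs_of_neg h1]; ring
  have habs : |t| = δ/2 := by
    rcases le_or_gt (δ/2) 0 with h1 | h1
    · linarith [abs_nonneg t]
    · rcases lt_or_ge 0 (v i) with h2 | h2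
      · simp [ht, h2, abs_of_pos h1]
      · simp [ht, not_lt.mpr h2, abs_of_pos h1]
  set y : E n := x + EuclideanSpace.single i t with hy
  have hsub : y - x = EuclideanSpace.single i t := by simp [hy]
  have hnorm : ‖y - x‖ = δ/2 := by rw [hsub, EuclideanSpace.norm_single]; simpa using habs
  have hlt : ‖y - x‖ < δ := by rw [hnorm]; linarith
  have := H y (hmem t) hlt
  rw [hsub] at this
  rw [EuclideanSpace.inner_single_right] at this
  simp only [RCLike.conj_to_real, hnorm] at this
  rw [mul_comm t (v i), hvt, EuclideanSpace.norm_single] at this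
  rw [Real.norm_eq_abs, habs] at this
  nlinarith [abs_pos.mpr h]

lemma abs_coord_le_norm {n : ℕ} (z : E n) (i : Fin n) : |z i| ≤ ‖z‖ := by
  have h := abs_real_inner_le_norm (EuclideanSpace.single i (1:ℝ)) z
  rw [EuclideanSpace.inner_single_left] at h
  simpa using h

theorem stmt12 {n s : ℕ} (hs : s < n) (x : E n) (hx : x ∈ sparseSet n s) :
    ((supp x).card = s →
      frechetNormal (sparseSet n s) x = {v : E n | ∀ i ∈ supp x, v i = 0}) ∧
    ((supp x).card < s →
      frechetNormal (sparseSet n s) x = {0}) := by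
  constructor
  · intro hcard
    ext v
    constructor
    · intro hv i hi
      apply coord_zero_of_mem x v i hv
      intro t
      have h1 := supp_add_single_subset x i t
      have h2 : insert i (supp x) = supp x := Finset.insert_eq_self.mpr hi
      rw [h2] at h1
      calc l0 (x + EuclideanSpace.single i t) ≤ (supp x).card := Finset.card_le_card h1
        _ ≤ s := hcard.le
    · intro hv
      intro ε hε
      -- find δ small enough that supp x ⊆ supp y
      obtain ⟨δ, hδ, hδle⟩ : ∃ δ > (0:ℝ), ∀ i ∈ supp x, δ ≤ |x i| := by
        by_cases hemp : supp x = ∅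
        · exact ⟨1, one_pos, by simp [hemp]⟩
        · have hne : (supp x).Nonempty := Finset.nonempty_of_ne_empty hemp
          refine ⟨(supp x).inf' hne (fun i => |x i|), ?_, fun i hi => Finset.inf'_le _ hi⟩
          rw [gt_iff_lt, Finset.lt_inf'_iff]
          intro i hi
          simp only [supp, Finset.mem_filter, Finset.mem_univ, true_and] at hi
          exact abs_pos.mpr hi
      refine ⟨δ, hδ, fun y hy hnorm => ?_⟩
      have hsupp : supp x ⊆ supp y := by
        intro i hi
        simp only [supp, Finset.mem_filter, Finset.mem_univ, true_and] at hi ⊢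
        have h1 : |y i - x i| ≤ ‖y - x‖ := by
          have := abs_coord_le_norm (y - x) i
          simpa using this
        intro hyi
        rw [hyi] at h1
        simp only [zero_sub, abs_neg] at h1
        have := hδle i (by simp [supp, hi])
        linarith
      have heq : supp y = supp x := by
        symm
        apply (Finset.eq_of_subset_of_card_le hsupp)
        rw [hcard]; exact hy
      have hinner : (inner ℝ v (y - x) : ℝ) = 0 := by
        rw [PiLp.inner_apply]
        apply Finset.sum_eq_zero
        intro i _
        by_cases hi : i ∈ supp x
        · simp [hv i hi]
        · have hxi : x i = 0 := by
            by_contra h; exact hi (by simp [supp, h])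
          have hyi : y i = 0 := by
            by_contra h
            exact hi (heq ▸ (by simp [supp, h] : i ∈ supp y))
          simp [PiLp.sub_apply, hxi, hyi]
      rw [hinner]
      positivity
  · intro hcard
    ext v
    constructor
    · intro hv
      have : ∀ i, v i = 0 := by
        intro i
        apply coord_zero_of_mem x v i hv
        intro t
        calc l0 (x + EuclideanSpace.single i t)
            ≤ (insert i (supp x)).card := Finset.card_le_card (supp_add_single_subset x i t)
          _ ≤ (supp x).card + 1 := Finset.card_insert_le _ _
          _ ≤ s := hcard
      simp only [Set.mem_singleton_iff]
      ext i
      exact this i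
    · intro hv
      simp only [Set.mem_singleton_iff] at hv
      subst hv
      intro ε hε
      exact ⟨1, one_pos, fun y _ _ => by rw [inner_zero_left]; positivity⟩
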